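/- Let G be a finite simple graph and let f, g : G → G be graph homomorphisms whose supports supp(f) = {x : f x ≠ x} and supp(g) = {y : g y ≠ y} are nonempty and disjoint, and which are weakly adjacency congruent: for all x ∈ supp(f) and y ∈ supp(g) with x adjacent to y, f x is adjacent to g y. Then there exists a family P : V(G) → V(G) → Matrix (Fin 2) (Fin 2) ℂ of self-adjoint idempotent matrices such that ∑_{y} P x y = 1 for every x, P x y · P x' y' = 0 whenever x is adjacent to x' and y is not adjacent to y', and there exist x, y, b, b' ∈ V(G) with P x b · P y b' ≠ P y b' · P x b. -/
import Mathlib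


open Matrix

/-- Auxiliary: summing a two-point indicator family of matrices. -/
lemma stmt18_sum_pair {V : Type*} [Fintype V] [DecidableEq V] (a b : V) (hab : b ≠ a)
    (M N : Matrix (Fin 2) (Fin 2) ℂ) :
    ∑ y : V, (if y = a then M else if y = b then N else 0) = M + N := by
  have h : ∀ y : V, (if y = a then M else if y = b then N else 0) =
      (if y = a then M else 0) + (if y = b then N else 0) := by
    intro y
    by_cases h1 : y = a
    · subst h1; simp [Ne.symm hab]
    · by_cases h2 : y = b <;> simp [h1, h2, hab]
  simp_rw [h]
  rw [Finset.sum_add_distrib]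
  simp [Finset.sum_ite_eq']

theorem stmt18 {V : Type*} [Fintype V] (G : SimpleGraph V)
    (f g : G →g G)
    (hf : ∃ x, f x ≠ x) (hg : ∃ y, g y ≠ y)
    (hdisj : ∀ x, f x ≠ x → g x = x)
    (hwac : ∀ x y, f x ≠ x → g y ≠ y → G.Adj x y → G.Adj (f x) (g y)) :
    ∃ P : V → V → Matrix (Fin 2) (Fin 2) ℂ,
      (∀ x y, (P x y)ᴴ = P x y ∧ P x y * P x y = P x y) ∧
      (∀ x, ∑ y : V, P x y = 1) ∧
      (∀ x x' y y', G.Adj x x' → ¬ G.Adj y y' → P x y * P x' y' = 0) ∧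
      (∃ x y b b', P x b * P y b' ≠ P y b' * P x b) := by
  classical
  obtain ⟨x0, hx0⟩ := hf
  obtain ⟨y0, hy0⟩ := hg
  have hdisj' : ∀ x, g x ≠ x → f x = x := by
    intro x h
    by_contra h'
    exact h (hdisj x h')
  set p : Matrix (Fin 2) (Fin 2) ℂ := !![1,0;0,0] with hpdef
  set q : Matrix (Fin 2) (Fin 2) ℂ := !![1/2,1/2;1/2,1/2] with hqdef
  have hp2 : p * p = p := by rw [hpdef, Matrix.mul_fin_two]; norm_num
  have hq2 : q * q = q := by rw [hqdef, Matrix.mul_fin_two]; norm_num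
  have hpH : pᴴ = p := by ext i j; fin_cases i <;> fin_cases j <;> simp [hpdef]
  have hqH : qᴴ = q := by ext i j; fin_cases i <;> fin_cases j <;> simp [hqdef]
  have hpq : p * q ≠ q * p := by
    intro h
    rw [hpdef, hqdef, Matrix.mul_fin_two, Matrix.mul_fin_two, ← Matrix.ext_iff] at h
    have := h 0 1
    norm_num at this
  have h1pH : (1 - p)ᴴ = 1 - p := by simp [hpH]
  have h1qH : (1 - q)ᴴ = 1 - q := by simp [hqH]
  have h1p2 : (1 - p) * (1 - p) = 1 - p := by simp [sub_mul, mul_sub, hp2]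
  have h1q2 : (1 - q) * (1 - q) = 1 - q := by simp [sub_mul, mul_sub, hq2]
  have h0 : (0 : Matrix (Fin 2) (Fin 2) ℂ)ᴴ = 0 ∧
      (0 : Matrix (Fin 2) (Fin 2) ℂ) * 0 = 0 := ⟨by simp, by simp⟩
  have h1 : (1 : Matrix (Fin 2) (Fin 2) ℂ)ᴴ = 1 ∧
      (1 : Matrix (Fin 2) (Fin 2) ℂ) * 1 = 1 := ⟨by simp, by simp⟩
  refine ⟨fun x y =>
    if f x = x then
      (if g x = x then (if y = x then 1 else 0)
       else (if y = x then 1 - q else if y = g x then q else 0))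
    else (if y = x then 1 - p else if y = f x then p else 0),
    ?_, ?_, ?_, ?_⟩
  · intro x y
    dsimp only
    split_ifs
    all_goals first
      | exact h0
      | exact h1
      | exact ⟨hpH, hp2⟩
      | exact ⟨hqH, hq2⟩
      | exact ⟨h1pH, h1p2⟩
      | exact ⟨h1qH, h1q2⟩
  · intro x
    dsimp only
    by_cases hfx : f x = x
    · by_cases hgx : g x = x
      · simp [hfx, hgx, Finset.sum_ite_eq']
      · have hb : ∀ y : V, (if f x = x then
            (if g x = x then (if y = x then (1 : Matrix (Fin 2) (Fin 2) ℂ) else 0)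
             else (if y = x then 1 - q else if y = g x then q else 0))
            else (if y = x then 1 - p else if y = f x then p else 0)) =
            (if y = x then 1 - q else if y = g x then q else 0) := by
          intro y; rw [if_pos hfx, if_neg hgx]
        rw [Finset.sum_congr rfl fun y _ => hb y, stmt18_sum_pair x (g x) hgx]
        abel
    · have hb : ∀ y : V, (if f x = x then
          (if g x = x then (if y = x then (1 : Matrix (Fin 2) (Fin 2) ℂ) else 0)
           else (if y = x then 1 - q else if y = g x then q else 0))
          else (if y = x then 1 - p else if y = f x then p else 0)) =
          (if y = x then 1 - p else if y = f x then p else 0) := by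
        intro y; rw [if_neg hfx]
      rw [Finset.sum_congr rfl fun y _ => hb y, stmt18_sum_pair x (f x) hfx]
      abel
  · intro x x' y y' hadj hnadj
    dsimp only
    split_ifs
    all_goals first
      | (simp [sub_mul, mul_sub, hp2, hq2]; done)
      | (exfalso; apply hnadj; subst_vars;
         first
           | exact hadj
           | exact f.map_adj hadj
           | exact g.map_adj hadj
           | (simpa [*] using f.map_adj hadj)
           | (simpa [*] using g.map_adj hadj)
           | (simpa [hdisj x (by assumption), *] using g.map_adj hadj)
           | (simpa [hdisj x' (by assumption), *] using g.map_adj hadj)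
           | (simpa [hdisj' x (by assumption), *] using f.map_adj hadj)
           | (simpa [hdisj' x' (by assumption), *] using f.map_adj hadj)
           | exact hwac x x' (by assumption) (by assumption) hadj
           | exact (hwac x' x (by assumption) (by assumption) hadj.symm).symm)
  · refine ⟨x0, y0, f x0, g y0, ?_⟩
    dsimp only
    rw [if_neg hx0, if_pos (hdisj' y0 hy0), if_neg hy0]
    rw [if_neg (fun h => hx0 h), if_pos rfl, if_neg (fun h => hy0 h), if_pos rfl]
    exact hpq
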